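/- Let γ, δ ∈ ℚ with δ ∉ {−1,0,1}, γ ∉ {−1,0,1} and γ ≠ −δ. Define for a finite set H of positive integers g_y,H(γ,δ) = δ · Π_{h∈H} (δγ(δγ+1)^h + (δ+γ)^h)/(δ(δγ+1)^h + γ(δ+γ)^h). Then, with u₁ = 1/(γ²−1), u₂ = γ/(δ(γ²−1)), w = (δ+γ)/(δγ+1), one has u₁, u₂ ≠ 0, w ∉ {−1,0,1}, and the identity g_y,H(γ,δ) = (δ/γ^{|H|}) · Π_{h∈H} (1 + 1/(u₁ + u₂·w^h)) holds whenever all denominators involved are nonzero. -/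

import Mathlib

open Finset

theorem g_y_rewrite (γ δ : ℚ)
    (hδ : δ ≠ -1 ∧ δ ≠ 0 ∧ δ ≠ 1) (hγ : γ ≠ -1 ∧ γ ≠ 0 ∧ γ ≠ 1)
    (hγδ : γ ≠ -δ) (hw : δ * γ + 1 ≠ 0) :
    (1 / (γ ^ 2 - 1) ≠ 0) ∧
    (γ / (δ * (γ ^ 2 - 1)) ≠ 0) ∧
    ((δ + γ) / (δ * γ + 1) ≠ -1 ∧ (δ + γ) / (δ * γ + 1) ≠ 0 ∧ (δ + γ) / (δ * γ + 1) ≠ 1) ∧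
    ∀ H : Finset ℕ, (∀ h ∈ H, 0 < h) →
      (∀ h ∈ H, δ * (δ * γ + 1) ^ h + γ * (δ + γ) ^ h ≠ 0) →
      (∀ h ∈ H,
        1 / (γ ^ 2 - 1) +
          γ / (δ * (γ ^ 2 - 1)) * ((δ + γ) / (δ * γ + 1)) ^ h ≠ 0) →
      δ * ∏ h ∈ H,
          (δ * γ * (δ * γ + 1) ^ h + (δ + γ) ^ h) /
            (δ * (δ * γ + 1) ^ h + γ * (δ + γ) ^ h) =
        δ / γ ^ H.card * ∏ h ∈ H,
          (1 + 1 /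
            (1 / (γ ^ 2 - 1) +
              γ / (δ * (γ ^ 2 - 1)) * ((δ + γ) / (δ * γ + 1)) ^ h)) := by
  obtain ⟨hδ1, hδ0, hδ2⟩ := hδ
  obtain ⟨hγ1, hγ0, hγ2⟩ := hγ
  have hγsq : γ ^ 2 - 1 ≠ 0 := by
    intro h
    have h' : (γ - 1) * (γ + 1) = 0 := by linear_combination h
    rcases mul_eq_zero.1 h' with h'' | h''
    · exact hγ2 (by linarith)
    · exact hγ1 (by linarith)
  have hsum : δ + γ ≠ 0 := fun h => hγδ (by linarith)
  refine ⟨one_div_ne_zero hγsq, div_ne_zero hγ0 (mul_ne_zero hδ0 hγsq), ⟨?_, ?_, ?_⟩, ?_⟩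
  · intro h
    rw [div_eq_iff hw] at h
    have h' : (δ + 1) * (γ + 1) = 0 := by linear_combination h
    rcases mul_eq_zero.1 h' with h'' | h''
    · exact hδ1 (by linarith)
    · exact hγ1 (by linarith)
  · exact div_ne_zero hsum hw
  · intro h
    rw [div_eq_iff hw] at h
    have h' : (δ - 1) * (γ - 1) = 0 := by linear_combination -h
    rcases mul_eq_zero.1 h' with h'' | h''
    · exact hδ2 (by linarith)
    · exact hγ2 (by linarith)
  · intro H hpos hden hden2
    have hstep : ∀ h ∈ H,
        (δ * γ * (δ * γ + 1) ^ h + (δ + γ) ^ h) /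
            (δ * (δ * γ + 1) ^ h + γ * (δ + γ) ^ h) =
        (1 / γ) * (1 + 1 /
            (1 / (γ ^ 2 - 1) +
              γ / (δ * (γ ^ 2 - 1)) * ((δ + γ) / (δ * γ + 1)) ^ h)) := by
      intro h hh
      have hA : (δ * γ + 1) ^ h ≠ 0 := pow_ne_zero _ hw
      have hd1 := hden h hh
      have hd2 := hden2 h hh
      rw [div_pow]
      generalize (δ * γ + 1) ^ h = A at hA hd1 ⊢
      generalize (δ + γ) ^ h = B at hd1 ⊢
      have key : 1 / (γ ^ 2 - 1) + γ / (δ * (γ ^ 2 - 1)) * (B / A) =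
          (δ * A + γ * B) / (δ * (γ ^ 2 - 1) * A) := by
        field_simp
      rw [key, one_div_div]
      field_simp
      ring
    rw [Finset.prod_congr rfl hstep, Finset.prod_mul_distrib, Finset.prod_const,
      div_pow, one_pow, div_eq_mul_inv δ, div_eq_mul_inv (1:ℚ), one_mul, mul_assoc]
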